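/- Every polite basis B of O(N) is compatible with the polytopal filtration: for every convex polytope K in Q⊗ℝ, the subspace S(K), spanned by the weight functions f with Pol(f) ⊆ K, is spanned by B ∩ S(K). -/

import Mathlib

open scoped TensorProduct
open TensorProduct

noncomputable section

namespace MVPaper

variable {k A : Type} [Field k] [Ring A] [Bialgebra k A]
variable {ι : Type} [AddCommMonoid ι] [DecidableEq ι]
variable (𝒜 : ι → Submodule k A) [DirectSum.Decomposition 𝒜]

/-- The projection of `A` onto its degree-`γ` homogeneous component. -/
def proj (γ : ι) : A →ₗ[k] A :=
  (𝒜 γ).subtype ∘ₗ (DirectSum.component k ι (fun i => 𝒜 i) γ) ∘ₗ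
    (DirectSum.decomposeLinearEquiv 𝒜).toLinearMap

/-- The projection of `A ⊗ A` onto its bidegree-`(β, γ)` homogeneous component. -/
def projT (β γ : ι) : A ⊗[k] A →ₗ[k] A ⊗[k] A :=
  TensorProduct.map (proj 𝒜 β) (proj 𝒜 γ)

/-- `L(a)`: the set of left degrees appearing in the coproduct of `a`. -/
def Lset (a : A) : Set ι :=
  {β | ∃ γ, projT 𝒜 β γ (Coalgebra.comul (R := k) a) ≠ 0}

/-- `R(a)`: the set of right degrees appearing in the coproduct of `a`. -/
def Rset (a : A) : Set ι :=
  {γ | ∃ β, projT 𝒜 β γ (Coalgebra.comul (R := k) a) ≠ 0}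

/-- The coproduct respects the grading. -/
def ComulGraded : Prop :=
  ∀ (γ : ι), ∀ a ∈ 𝒜 γ, ∀ β δ : ι, β + δ ≠ γ →
    projT 𝒜 β δ (Coalgebra.comul (R := k) a) = 0

/-- The coproduct of any element is the (finite) sum of its homogeneous components. -/
def ComulDecomposes : Prop :=
  ∀ a : A, ∃ S : Finset (ι × ι),
    Coalgebra.comul (R := k) a = ∑ p ∈ S, projT 𝒜 p.1 p.2 (Coalgebra.comul (R := k) a)

/-- Connectedness: the degree-`0` component is spanned by the unit. -/
def GradedConnected : Prop := 𝒜 0 = Submodule.span k {(1 : A)}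

end MVPaper

namespace MVPaper

variable {k O : Type} [Field k] [Ring O] [Bialgebra k O]
variable {I : Type} [Fintype I] [DecidableEq I] [DecidableEq (I → ℤ)]
variable (𝒪 : (I → ℤ) → Submodule k O) [DirectSum.Decomposition 𝒪]

/-- The height of a weight: the sum of its coordinates on the simple roots. -/
def ht (lam : I → ℤ) : ℤ := ∑ v, lam v

/-- `J_θ : λ ↦ −(ht λ, θ(λ))`, turning the weight grading into a grading by a submonoid of
the right half-plane. -/
def Jmap (θ : I → ℝ) (lam : I → ℤ) : ℝ × ℝ :=
  (-(ht lam : ℝ), -∑ v, θ v * (lam v : ℝ))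

/-- `Π′ = {(r,d) | d < 0 or (d = 0 and r ≥ 0)}`. -/
def PiP : Set (ℝ × ℝ) := {p | p.2 < 0 ∨ (p.2 = 0 ∧ 0 ≤ p.1)}

/-- `Π″ = {(r,d) | d > 0 or (d = 0 and r ≥ 0)}`. -/
def PiPP : Set (ℝ × ℝ) := {p | 0 < p.2 ∨ (p.2 = 0 ∧ 0 ≤ p.1)}

/-- The filtration `θF′_α O`, spanned by the homogeneous `f` with `J_θ(L(f)) ⊆ α + Π′`. -/
def Fprime (θ : I → ℝ) (α : ℝ × ℝ) : Submodule k O :=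
  Submodule.span k {f : O | ∃ lam : I → ℤ, f ∈ 𝒪 lam ∧
    ∀ μ ∈ Lset 𝒪 f, Jmap θ μ - α ∈ PiP}

/-- The filtration `θF″_β O`, spanned by the homogeneous `f` with `J_θ(R(f)) ⊆ β + Π″`. -/
def Fdprime (θ : I → ℝ) (β : ℝ × ℝ) : Submodule k O :=
  Submodule.span k {f : O | ∃ lam : I → ℤ, f ∈ 𝒪 lam ∧
    ∀ μ ∈ Rset 𝒪 f, Jmap θ μ - β ∈ PiPP}

/-- `Pol(f)`: the convex hull in `Q ⊗ ℝ` of the set `L(f)` of weights of the left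
`N`-submodule generated by `f`. -/
def PolO (f : O) : Set (I → ℝ) :=
  convexHull ℝ {x : I → ℝ | ∃ μ ∈ Lset 𝒪 f, ∀ v, x v = (μ v : ℝ)}

/-- `Pol^∧_θ(f)` for `f` of weight `lam`: the region between the upper rim of `Pol_θ(f)` and
the segment from `0` to `J_θ(lam)`. -/
def PolWedgeTheta (θ : I → ℝ) (f : O) (lam : I → ℤ) : Set (ℝ × ℝ) :=
  {p | (∃ t ∈ Set.Icc (0 : ℝ) 1,
          p.1 = t * (Jmap θ lam).1 ∧ t * (Jmap θ lam).2 ≤ p.2) ∧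
       (∃ q ∈ convexHull ℝ ((Jmap θ) '' Lset 𝒪 f), q.1 = p.1 ∧ p.2 ≤ q.2)}

/-- A basis `B` of `O = O(N)` is *polite* if its elements are weight vectors, it contains
the powers `ζ_iⁿ`, and for every stability parameter `θ` it is compatible with the
filtrations `θF′`, `θF″` and with the splitting isomorphisms `Δ̄′`, `Δ̄″` (stated here as:
the extreme homogeneous component of the coproduct of a basis element is a pure tensor of
basis elements). -/
def IsPolite (ζ : I → O) (B : Set O) : Prop :=
  Submodule.span k B = ⊤ ∧
  LinearIndependent k (fun b : B => (b : O)) ∧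
  (∀ f ∈ B, ∃ lam : I → ℤ, (∀ v, lam v ≤ 0) ∧ f ∈ 𝒪 lam) ∧
  (∀ (i : I) (n : ℕ), ζ i ^ n ∈ B) ∧
  (∀ (θ : I → ℝ) (α : ℝ × ℝ),
    Fprime 𝒪 θ α = Submodule.span k (B ∩ (Fprime 𝒪 θ α : Set O))) ∧
  (∀ (θ : I → ℝ) (β : ℝ × ℝ),
    Fdprime 𝒪 θ β = Submodule.span k (B ∩ (Fdprime 𝒪 θ β : Set O))) ∧
  (∀ θ : I → ℝ, ∀ f ∈ B, ∀ lam : I → ℤ, f ∈ 𝒪 lam → ∀ μ ∈ Lset 𝒪 f,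
    (∀ μ' ∈ Lset 𝒪 f, Jmap θ μ' - Jmap θ μ ∈ PiP) →
    ∃ b₁ ∈ B, ∃ b₂ ∈ B,
      projT 𝒪 μ (lam - μ) (Coalgebra.comul (R := k) f) = b₁ ⊗ₜ[k] b₂) ∧
  (∀ θ : I → ℝ, ∀ f ∈ B, ∀ lam : I → ℤ, f ∈ 𝒪 lam → ∀ μ ∈ Rset 𝒪 f,
    (∀ μ' ∈ Rset 𝒪 f, Jmap θ μ' - Jmap θ μ ∈ PiPP) →
    ∃ b₁ ∈ B, ∃ b₂ ∈ B,
      projT 𝒪 (lam - μ) μ (Coalgebra.comul (R := k) f) = b₁ ⊗ₜ[k] b₂)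

end MVPaper

namespace MVPaper

section Aux

variable {k O : Type} [Field k] [Ring O] [Bialgebra k O]
variable {I : Type} [Fintype I] [DecidableEq I] [DecidableEq (I → ℤ)]
variable (𝒪 : (I → ℤ) → Submodule k O) [DirectSum.Decomposition 𝒪]

lemma proj_mem_aux (γ : I → ℤ) (a : O) : proj 𝒪 γ a ∈ 𝒪 γ := by
  simp only [proj, LinearMap.coe_comp, Function.comp_apply, Submodule.coe_subtype]
  exact SetLike.coe_mem _

lemma proj_of_mem {γ : I → ℤ} {a : O} (h : a ∈ 𝒪 γ) : proj 𝒪 γ a = a := by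
  simp [proj, DirectSum.decomposeLinearEquiv, DirectSum.component, DFinsupp.lapply,
    DirectSum.decompose_of_mem_same 𝒪 h]

lemma proj_of_mem_ne {γ δ : I → ℤ} (hne : δ ≠ γ) {a : O} (h : a ∈ 𝒪 δ) : proj 𝒪 γ a = 0 := by
  simp [proj, DirectSum.decomposeLinearEquiv, DirectSum.component, DFinsupp.lapply,
    DirectSum.decompose_of_mem_ne 𝒪 h hne]

lemma proj_eq_zero_of_bot {γ : I → ℤ} (h : 𝒪 γ = ⊥) (a : O) : proj 𝒪 γ a = 0 := by
  have hm := proj_mem_aux 𝒪 γ a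
  rw [h] at hm
  simpa using hm

lemma Lset_nonbot {f : O} {μ : I → ℤ} (h : μ ∈ Lset 𝒪 f) : 𝒪 μ ≠ ⊥ := by
  intro hb
  obtain ⟨γ, hne⟩ := h
  apply hne
  have hz : projT 𝒪 μ γ = 0 := by
    apply TensorProduct.ext'
    intro x y
    simp [projT, proj_eq_zero_of_bot 𝒪 hb]
  simp [hz]

/-- Key extraction lemma : a homogeneous element of `Fprime` satisfies the half-plane
condition on its whole `L`-set. -/
lemma lsetJ_of_mem_Fprime {θ : I → ℝ} {α : ℝ × ℝ} {lam : I → ℤ} {f : O}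
    (hf : f ∈ 𝒪 lam) (h : f ∈ Fprime 𝒪 θ α) :
    ∀ μ ∈ Lset 𝒪 f, Jmap θ μ - α ∈ PiP := by
  have key : ∀ g, g ∈ Fprime 𝒪 θ α → ∀ μ ∈ Lset 𝒪 (proj 𝒪 lam g), Jmap θ μ - α ∈ PiP := by
    intro g hg
    induction hg using Submodule.span_induction with
    | mem x hx =>
      obtain ⟨mu, hmu, hcond⟩ := hx
      by_cases hml : mu = lam
      · subst hml
        rw [proj_of_mem 𝒪 hmu]
        exact hcond
      · rw [proj_of_mem_ne 𝒪 hml hmu]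
        rintro μ ⟨γ, hne⟩
        simp at hne
    | zero =>
      rintro μ ⟨γ, hne⟩
      simp at hne
    | add x y hx hy ihx ihy =>
      rintro μ ⟨γ, hne⟩
      rcases ne_or_eq (projT 𝒪 μ γ (Coalgebra.comul (R := k) (proj 𝒪 lam x))) 0 with h1 | h1
      · exact ihx μ ⟨γ, h1⟩
      rcases ne_or_eq (projT 𝒪 μ γ (Coalgebra.comul (R := k) (proj 𝒪 lam y))) 0 with h2 | h2
      · exact ihy μ ⟨γ, h2⟩
      exact absurd (by rw [map_add, map_add, map_add, h1, h2, add_zero]) hne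
    | smul c x hx ihx =>
      rintro μ ⟨γ, hne⟩
      refine ihx μ ⟨γ, fun h0 => hne ?_⟩
      rw [map_smul, map_smul, map_smul, h0, smul_zero]
  have key2 := key f h
  rwa [proj_of_mem 𝒪 hf] at key2

/-- A homogeneous element lies in the span of the basis vectors of the same weight. -/
lemma mem_span_inter_weight {B : Set O} (𝔅 : Module.Basis B k O) (h𝔅 : ∀ i : B, 𝔅 i = (i : O))
    (hhom : ∀ f ∈ B, ∃ lam : I → ℤ, f ∈ 𝒪 lam)
    {lam : I → ℤ} {f : O} (hf : f ∈ 𝒪 lam) :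
    f ∈ Submodule.span k (B ∩ (𝒪 lam : Set O)) := by
  have hrepr : f = (𝔅.repr f).sum fun i c => c • proj 𝒪 lam (𝔅 i) := by
    conv_lhs => rw [← proj_of_mem 𝒪 hf, ← 𝔅.linearCombination_repr f]
    rw [Finsupp.linearCombination_apply, Finsupp.sum, Finsupp.sum, map_sum]
    exact Finset.sum_congr rfl fun i _ => (map_smul _ _ _)
  rw [hrepr]
  refine Submodule.sum_mem _ fun i _ => ?_
  dsimp only
  obtain ⟨mu, hmu⟩ := hhom (i : O) i.2
  by_cases hml : mu = lam
  · subst hml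
    rw [h𝔅 i, proj_of_mem 𝒪 hmu]
    exact Submodule.smul_mem _ _ (Submodule.subset_span ⟨i.2, hmu⟩)
  · rw [h𝔅 i, proj_of_mem_ne 𝒪 hml hmu, smul_zero]
    exact Submodule.zero_mem _

/-- Support characterisation of membership in the span of `B ∩ s`. -/
lemma mem_span_inter_iff {B : Set O} (𝔅 : Module.Basis B k O) (h𝔅 : ∀ i : B, 𝔅 i = (i : O))
    (s : Set O) (f : O) :
    f ∈ Submodule.span k (B ∩ s) ↔ ∀ i ∈ (𝔅.repr f).support, (i : O) ∈ s := by
  constructor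
  · intro hf i hi
    have hsub : B ∩ s ⊆ 𝔅 '' (Subtype.val ⁻¹' s) := by
      rintro x ⟨hxB, hxs⟩
      exact ⟨⟨x, hxB⟩, hxs, h𝔅 _⟩
    have := 𝔅.mem_span_image.1 (Submodule.span_mono hsub hf)
    exact this hi
  · intro hsupp
    have : f ∈ Submodule.span k (𝔅 '' (Subtype.val ⁻¹' s)) :=
      𝔅.mem_span_image.2 (by intro i hi; exact hsupp i (by simpa using hi))
    refine Submodule.span_mono ?_ this
    rintro x ⟨i, his, rfl⟩
    rw [h𝔅 i]
    exact ⟨i.2, his⟩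

/-- Separation of a point from the convex hull of a finite set by an affine half-space. -/
lemma separation_aux {F : Finset (I → ℝ)} {x : I → ℝ}
    (hx : x ∉ convexHull ℝ (F : Set (I → ℝ))) :
    ∃ (θ : I → ℝ) (m : ℝ), (∀ y ∈ convexHull ℝ (F : Set (I → ℝ)), m ≤ ∑ v, θ v * y v) ∧
      ∑ v, θ v * x v < m := by
  have hcl : IsClosed (convexHull ℝ (F : Set (I → ℝ))) := F.finite_toSet.isClosed_convexHull ℝ
  obtain ⟨g, u, hgx, hgy⟩ :=
    geometric_hahn_banach_point_closed (convex_convexHull ℝ _) hcl hx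
  have key : ∀ z : I → ℝ, ∑ v, g (fun j => if v = j then (1 : ℝ) else 0) * z v = g z := by
    intro z
    conv_rhs => rw [pi_eq_sum_univ z, map_sum]
    refine Finset.sum_congr rfl fun v _ => ?_
    rw [map_smul, smul_eq_mul, mul_comm]
  exact ⟨fun v => g (fun j => if v = j then (1 : ℝ) else 0), u,
    fun y hy => by rw [key y]; exact (hgy y hy).le, by rw [key x]; exact hgx⟩

/-- `Pol(f) ⊆ K` iff every weight in `L(f)` lies in `K`, for convex `K`. -/
lemma pol_subset_iff {f : O} {K : Set (I → ℝ)} (hKc : Convex ℝ K) :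
    PolO 𝒪 f ⊆ K ↔ ∀ μ ∈ Lset 𝒪 f, (fun v => (μ v : ℝ)) ∈ K := by
  constructor
  · intro h μ hμ
    exact h (subset_convexHull ℝ _ ⟨μ, hμ, fun v => rfl⟩)
  · intro h
    refine convexHull_min ?_ hKc
    rintro x ⟨μ, hμ, hx⟩
    have hxe : x = fun v => (μ v : ℝ) := funext hx
    rw [hxe]
    exact h μ hμ

lemma mem_PiP_of_halfspace {θ : I → ℝ} {m : ℝ} {μ : I → ℤ} (hμ : ∀ v, μ v ≤ 0)
    (hm : m ≤ ∑ v, θ v * (μ v : ℝ)) : Jmap θ μ - ((0 : ℝ), -m) ∈ PiP := by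
  have hht : ((ht μ : ℤ) : ℝ) ≤ 0 := by
    have h0 : ht μ ≤ 0 := Finset.sum_nonpos (fun v _ => hμ v)
    exact_mod_cast h0
  have h1 : (Jmap θ μ - ((0 : ℝ), -m)).1 = -((ht μ : ℤ) : ℝ) := by simp [Jmap]
  have h2 : (Jmap θ μ - ((0 : ℝ), -m)).2 = m - ∑ v, θ v * (μ v : ℝ) := by
    simp [Jmap]; ring
  show _ < 0 ∨ _
  rw [h1, h2]
  rcases lt_or_eq_of_le hm with h | h
  · left; linarith
  · right; constructor <;> linarith

lemma halfspace_of_mem_PiP {θ : I → ℝ} {m : ℝ} {μ : I → ℤ}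
    (h : Jmap θ μ - ((0 : ℝ), -m) ∈ PiP) : m ≤ ∑ v, θ v * (μ v : ℝ) := by
  have h2 : (Jmap θ μ - ((0 : ℝ), -m)).2 = m - ∑ v, θ v * (μ v : ℝ) := by
    simp [Jmap]; ring
  rcases h with h | h
  · rw [h2] at h; linarith
  · rw [h2] at h; linarith [h.1]

end Aux

end MVPaper

open MVPaper in
/-- Every polite basis `B` of `O(N)` is compatible with the polytopal
filtration: for every convex polytope `K` in `Q ⊗ ℝ`, the subspace `S(K)` spanned by the
weight functions `f` with `Pol(f) ⊆ K` is spanned by `B ∩ S(K)`. -/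
theorem prop_ConvComp
    {k O : Type} [Field k] [Ring O] [Bialgebra k O]
    {I : Type} [Fintype I] [DecidableEq I] [DecidableEq (I → ℤ)]
    (𝒪 : (I → ℤ) → Submodule k O) [DirectSum.Decomposition 𝒪] [SetLike.GradedMonoid 𝒪]
    (hconn : GradedConnected 𝒪) (hgr : ComulGraded 𝒪) (hdec : ComulDecomposes 𝒪)
    (hneg : ∀ lam : I → ℤ, 𝒪 lam ≠ ⊥ → ∀ v, lam v ≤ 0)
    (ζ : I → O) (hζ : ∀ i, ζ i ∈ 𝒪 (fun v => if v = i then -1 else 0))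
    (B : Set O) (hB : IsPolite 𝒪 ζ B)
    (K : Set (I → ℝ)) (hK : ∃ F : Finset (I → ℝ), K = convexHull ℝ (F : Set (I → ℝ))) :
    Submodule.span k {f : O | ∃ lam : I → ℤ, f ∈ 𝒪 lam ∧ PolO 𝒪 f ⊆ K} =
    Submodule.span k (B ∩
      (Submodule.span k {f : O | ∃ lam : I → ℤ, f ∈ 𝒪 lam ∧ PolO 𝒪 f ⊆ K} : Set O)) := by
  obtain ⟨F, rfl⟩ := hK
  obtain ⟨hspan, hli, hhom, hpow, hF', hF'', hc1, hc2⟩ := hB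
  set K : Set (I → ℝ) := convexHull ℝ (F : Set (I → ℝ)) with hKdef
  have hKconv : Convex ℝ K := convex_convexHull ℝ _
  have htop : ⊤ ≤ Submodule.span k (Set.range (fun b : B => (b : O))) := by
    rw [Subtype.range_coe]; exact hspan.ge
  let 𝔅 : Module.Basis B k O := Module.Basis.mk hli htop
  have h𝔅 : ∀ i : B, 𝔅 i = (i : O) := fun i => Module.Basis.mk_apply hli htop i
  set gen : Set O := {f : O | ∃ lam : I → ℤ, f ∈ 𝒪 lam ∧ PolO 𝒪 f ⊆ K} with hgen
  refine le_antisymm ?_ ?_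
  swap
  · rw [Submodule.span_le]
    exact fun x hx => hx.2
  rw [Submodule.span_le]
  rintro f ⟨lam, hflam, hfK⟩
  have hL : ∀ μ ∈ Lset 𝒪 f, (fun v => (μ v : ℝ)) ∈ K := (pol_subset_iff 𝒪 hKconv).1 hfK
  -- `f` belongs to every filtration step attached to a half-space containing `K`
  have hFmem : ∀ (θ : I → ℝ) (m : ℝ), (∀ y ∈ K, m ≤ ∑ v, θ v * y v) →
      f ∈ Fprime 𝒪 θ ((0 : ℝ), -m) := by
    intro θ m hhalf
    refine Submodule.subset_span ⟨lam, hflam, ?_⟩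
    intro μ hμ
    have hμneg : ∀ v, μ v ≤ 0 := hneg μ (Lset_nonbot 𝒪 hμ)
    exact mem_PiP_of_halfspace hμneg (hhalf _ (hL μ hμ))
  -- reduce to showing each basis vector in the support lies in `S(K)`
  rw [SetLike.mem_coe,
    mem_span_inter_iff 𝔅 h𝔅 ((Submodule.span k gen : Submodule k O) : Set O) f]
  intro i hi
  -- the basis vector has weight `lam`
  have hilam : (i : O) ∈ 𝒪 lam := by
    have hmem := mem_span_inter_weight 𝒪 𝔅 h𝔅
      (fun g hg => (hhom g hg).imp fun _ h => h.2) hflam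
    exact (mem_span_inter_iff 𝔅 h𝔅 ((𝒪 lam : Set O)) f).1 hmem i hi
  -- the basis vector satisfies every half-space condition containing `K`
  have hiF : ∀ (θ : I → ℝ) (m : ℝ), (∀ y ∈ K, m ≤ ∑ v, θ v * y v) →
      ∀ μ ∈ Lset 𝒪 (i : O), m ≤ ∑ v, θ v * (μ v : ℝ) := by
    intro θ m hhalf μ hμ
    have hfF := hFmem θ m hhalf
    rw [hF' θ ((0 : ℝ), -m)] at hfF
    have hiFp : (i : O) ∈ Fprime 𝒪 θ ((0 : ℝ), -m) :=
      (mem_span_inter_iff 𝔅 h𝔅 ((Fprime 𝒪 θ ((0 : ℝ), -m) : Set O)) f).1 hfF i hi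
    exact halfspace_of_mem_PiP (lsetJ_of_mem_Fprime 𝒪 hilam hiFp μ hμ)
  -- conclude that `Pol(i) ⊆ K`
  have hiK : PolO 𝒪 (i : O) ⊆ K := by
    rw [pol_subset_iff 𝒪 hKconv]
    intro μ hμ
    by_contra hnot
    obtain ⟨θ, m, hhalf, hlt⟩ := separation_aux (x := fun v => (μ v : ℝ)) hnot
    exact absurd (hiF θ m hhalf μ hμ) (not_le.2 hlt)
  exact Submodule.subset_span ⟨lam, hilam, hiK⟩
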